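/- Let f ∈ 𝒢 and let z ∈ ℂ. Then the series ∑_{k=0}^∞ (z^k/k!) · ∫_ℝ conj(f(x)) x^k dx converges, and its sum equals ∫_ℝ conj(f(x)) e^{z x} dx. -/

import Mathlib

open MeasureTheory Filter ComplexConjugate

/-- The set 𝒢: Schwartz functions `f` such that `x ↦ e^{k x} f(x)` is again a Schwartz
function for every complex `k` (the case `k = 0` says that `f` itself is Schwartz). -/
def MemG (f : ℝ → ℂ) : Prop :=
  ∀ k : ℂ, ∃ g : SchwartzMap ℝ ℂ, ∀ x : ℝ, g x = Complex.exp (k * x) * f x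

theorem series_for_exp_pairing (f : ℝ → ℂ) (hf : MemG f) (z : ℂ) :
    Tendsto (fun N : ℕ => ∑ k ∈ Finset.range N,
        z ^ k / (k.factorial : ℂ) * ∫ x : ℝ, conj (f x) * (x : ℂ) ^ k)
      atTop (nhds (∫ x : ℝ, conj (f x) * Complex.exp (z * x))) := by
  obtain ⟨g, hg⟩ := hf 0
  have hfg : ∀ x : ℝ, f x = g x := by
    intro x; rw [hg]; simp
  obtain ⟨g₁, hg₁⟩ := hf (‖z‖)
  obtain ⟨g₂, hg₂⟩ := hf (-(‖z‖ : ℂ))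
  have hfmeas : AEStronglyMeasurable f (volume : Measure ℝ) := by
    refine g.continuous.aestronglyMeasurable.congr ?_
    exact Eventually.of_forall fun x => (hfg x).symm
  -- integrability of each moment term
  have hInt : ∀ k : ℕ, Integrable (fun x : ℝ => conj (f x) * (x : ℂ) ^ k) := by
    intro k
    refine (g.integrable_pow_mul volume k).mono' ?_ ?_
    · exact (Complex.continuous_conj.comp_aestronglyMeasurable hfmeas).mul
        ((Complex.continuous_ofReal.pow k).aestronglyMeasurable)
    · refine Eventually.of_forall fun x => ?_
      rw [hfg x]
      simp [abs_pow, mul_comm]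
  -- the bound function
  set bound : ℝ → ℝ := fun x => ‖g₁ x‖ + ‖g₂ x‖ with hbound
  have hbound_int : Integrable bound := g₁.integrable.norm.add g₂.integrable.norm
  have hbound_ge : ∀ x : ℝ, ‖f x‖ * Real.exp (‖z‖ * |x|) ≤ bound x := by
    intro x
    have h1 : ‖g₁ x‖ = Real.exp (‖z‖ * x) * ‖f x‖ := by
      rw [hg₁ x, norm_mul, Complex.norm_exp]
      norm_num
    have h2 : ‖g₂ x‖ = Real.exp (-(‖z‖ * x)) * ‖f x‖ := by
      rw [hg₂ x, norm_mul, Complex.norm_exp]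
      norm_num
    show _ ≤ ‖g₁ x‖ + ‖g₂ x‖
    rw [h1, h2]
    rcases abs_cases x with ⟨h, _⟩ | ⟨h, _⟩
    · rw [h]
      nlinarith [Real.exp_pos (-(‖z‖ * x)), norm_nonneg (f x)]
    · rw [h, mul_neg]
      nlinarith [Real.exp_pos (‖z‖ * x), norm_nonneg (f x)]
  -- partial sums as integrals
  have key : ∀ N : ℕ, ∑ k ∈ Finset.range N,
      z ^ k / (k.factorial : ℂ) * ∫ x : ℝ, conj (f x) * (x : ℂ) ^ k
      = ∫ x : ℝ, ∑ k ∈ Finset.range N,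
          z ^ k / (k.factorial : ℂ) * (conj (f x) * (x : ℂ) ^ k) := by
    intro N
    rw [integral_finset_sum _ (fun k _ => (hInt k).const_mul _)]
    exact Finset.sum_congr rfl fun k _ => (integral_const_mul _ _).symm
  simp only [key]
  refine tendsto_integral_of_dominated_convergence bound ?_ hbound_int ?_ ?_
  · intro N
    exact Finset.aestronglyMeasurable_fun_sum _ fun k _ =>
      ((hInt k).aestronglyMeasurable).const_mul _
  · intro N
    refine Eventually.of_forall fun x => ?_
    calc ‖∑ k ∈ Finset.range N, z ^ k / (k.factorial : ℂ) * (conj (f x) * (x : ℂ) ^ k)‖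
        ≤ ∑ k ∈ Finset.range N, ‖z ^ k / (k.factorial : ℂ) * (conj (f x) * (x : ℂ) ^ k)‖ :=
          norm_sum_le _ _
      _ = ‖f x‖ * ∑ k ∈ Finset.range N, (‖z‖ * |x|) ^ k / k.factorial := by
          rw [Finset.mul_sum]
          refine Finset.sum_congr rfl fun k _ => ?_
          simp [norm_mul, norm_div, norm_pow,
            mul_pow]
          ring
      _ ≤ ‖f x‖ * Real.exp (‖z‖ * |x|) := by
          refine mul_le_mul_of_nonneg_left ?_ (norm_nonneg _)
          exact Real.sum_le_exp_of_nonneg (by positivity) N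
      _ ≤ bound x := hbound_ge x
  · refine Eventually.of_forall fun x => ?_
    have hsum : HasSum (fun k : ℕ => (z * x) ^ k / (k.factorial : ℂ))
        (Complex.exp (z * x)) := by
      rw [Complex.exp_eq_exp_ℂ]
      exact NormedSpace.expSeries_div_hasSum_exp (z * x)
    have := (hsum.tendsto_sum_nat).const_mul (conj (f x))
    refine this.congr fun N => ?_
    rw [Finset.mul_sum]
    refine Finset.sum_congr rfl fun k _ => ?_
    rw [mul_pow]
    ring
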